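/- arXiv:1706.04087 — 6 statements merged into one kernel-verified Lean document; each statement's English description precedes it below -/
import Mathlib

section
/- Consider the discrete-time linear system X(i+1) = (T·A + I)·X(i) + T·B·U(i) with T > 0, B invertible, and the first order DSMC input U(i) = B⁻¹·((1/T)·((P − I)·X(i) − P·X_d(i) + X_d(i+1)) − A·X(i)), where P is a diagonal matrix with diagonal entries ρ_1, …, ρ_n all lying in the open interval (0, 1). Then each component of the sliding surface S(i) = X(i) − X_d(i) satisfies the reaching law |s_p(i+1)| ≤ ρ_p·|s_p(i)|, the closed form s_p(i) = ρ_p^i · s_p(0) holds for every i, and s_p(i) → 0 as i → ∞ for every p. -/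
/-- For the discrete-time linear system with the SISO first order
DSMC law whose gain matrix `P = diag(ρ₁, …, ρₙ)` has `0 < ρ_p < 1`, each
component of the sliding surface `S(i) = X(i) − X_d(i)` satisfies the reaching
law `|s_p(i+1)| ≤ ρ_p·|s_p(i)|`, the closed form `s_p(i) = ρ_p^i · s_p(0)`,
and `s_p(i) → 0` as `i → ∞`. -/
theorem siso_first_order_dsmc_reaching_law
    {n : ℕ} (T : ℝ) (hT : 0 < T)
    (A B : Matrix (Fin n) (Fin n) ℝ) (hB : IsUnit B)
    (ρ : Fin n → ℝ) (hρ : ∀ p, 0 < ρ p ∧ ρ p < 1)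
    (P : Matrix (Fin n) (Fin n) ℝ) (hP : P = Matrix.diagonal ρ)
    (X Xd U S : ℕ → Fin n → ℝ)
    (hsys : ∀ i, X (i + 1) =
      (T • A + 1).mulVec (X i) + T • B.mulVec (U i))
    (hU : ∀ i, U i = B⁻¹.mulVec
      ((1 / T) • ((P - 1).mulVec (X i) - P.mulVec (Xd i) + Xd (i + 1))
        - A.mulVec (X i)))
    (hS : ∀ i, S i = X i - Xd i) :
    (∀ p, ∀ i, |S (i + 1) p| ≤ ρ p * |S i p|) ∧
    (∀ p, ∀ i, S i p = (ρ p) ^ i * S 0 p) ∧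
    (∀ p, Filter.Tendsto (fun i => S i p) Filter.atTop (nhds 0)) := by
  have hdet : IsUnit B.det := (Matrix.isUnit_iff_isUnit_det B).mp hB
  have key : ∀ i, S (i + 1) = P.mulVec (S i) := by
    intro i
    have h1 : B.mulVec (U i)
        = (1 / T) • ((P - 1).mulVec (X i) - P.mulVec (Xd i) + Xd (i + 1))
          - A.mulVec (X i) := by
      rw [hU, Matrix.mulVec_mulVec, Matrix.mul_nonsing_inv _ hdet,
        Matrix.one_mulVec]
    have hTT : T • ((1 / T) • ((P - 1).mulVec (X i) - P.mulVec (Xd i) + Xd (i + 1)))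
        = (P - 1).mulVec (X i) - P.mulVec (Xd i) + Xd (i + 1) := by
      rw [smul_smul, mul_one_div_cancel hT.ne', one_smul]
    rw [hS, hS, hsys, h1, smul_sub, hTT, Matrix.add_mulVec, Matrix.smul_mulVec,
      Matrix.one_mulVec, Matrix.sub_mulVec, Matrix.one_mulVec, Matrix.mulVec_sub]
    abel
  have comp : ∀ p i, S (i + 1) p = ρ p * S i p := by
    intro p i
    rw [key, hP, Matrix.mulVec_diagonal]
  have closed : ∀ p i, S i p = (ρ p) ^ i * S 0 p := by
    intro p i
    induction i with
    | zero => simp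
    | succ k ih => rw [comp, ih, pow_succ]; ring
  refine ⟨fun p i => ?_, closed, fun p => ?_⟩
  · rw [comp, abs_mul, abs_of_pos (hρ p).1]
  · have : Filter.Tendsto (fun i => (ρ p) ^ i * S 0 p) Filter.atTop (nhds 0) := by
      simpa using (tendsto_pow_atTop_nhds_zero_of_lt_one (le_of_lt (hρ p).1)
        (hρ p).2).mul_const (S 0 p)
    exact this.congr fun i => (closed p i).symm
end

section
/- Let T > 0, a ∈ ℝ, ρ ∈ ℝ, ρ_β > 0, ρ_α > 0, and let β, α ∈ ℝ be unknown constants. Suppose the scalar sliding surface satisfies s(i+1) = ρ·s(i) + T·(β̃(i)·a + α̃(i))·x(i), where β̃(i) = β − β̂(i) and α̃(i) = α − α̂(i), and the estimates are updated by the adaptation laws β̂(i+1) = β̂(i) + T·s(i)·a·x(i)/ρ_β and α̂(i+1) = α̂(i) + T·s(i)·x(i)/ρ_α. Then the following exact identity holds for every i: s(i)·(s(i+1) − s(i)) + ρ_β·β̃(i)·(β̃(i+1) − β̃(i)) + ρ_α·α̃(i)·(α̃(i+1) − α̃(i)) = −(1 − ρ)·s(i)². -/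
/-- For the scalar uncertain system with sliding dynamics
`s(i+1) = ρ·s(i) + T·(β̃(i)·a + α̃(i))·x(i)` and the adaptation laws
`β̂(i+1) = β̂(i) + T·s(i)·a·x(i)/ρ_β`, `α̂(i+1) = α̂(i) + T·s(i)·x(i)/ρ_α`,
the exact identity
`s(i)·Δs(i) + ρ_β·β̃(i)·Δβ̃(i) + ρ_α·α̃(i)·Δα̃(i) = −(1 − ρ)·s(i)²` holds. -/
theorem scalar_adaptive_dsmc_lyapunov_identity
    (T : ℝ) (hT : 0 < T) (a ρ : ℝ)
    (ρβ ρα : ℝ) (hρβ : 0 < ρβ) (hρα : 0 < ρα)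
    (β α : ℝ)
    (s x βhat αhat βtilde αtilde : ℕ → ℝ)
    (hβtilde : ∀ i, βtilde i = β - βhat i)
    (hαtilde : ∀ i, αtilde i = α - αhat i)
    (hs : ∀ i, s (i + 1) = ρ * s i + T * (βtilde i * a + αtilde i) * x i)
    (hβhat : ∀ i, βhat (i + 1) = βhat i + T * s i * a * x i / ρβ)
    (hαhat : ∀ i, αhat (i + 1) = αhat i + T * s i * x i / ρα) :
    ∀ i, s i * (s (i + 1) - s i)
        + ρβ * βtilde i * (βtilde (i + 1) - βtilde i)
        + ρα * αtilde i * (αtilde (i + 1) - αtilde i)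
      = -(1 - ρ) * (s i) ^ 2 := by
  intro i
  rw [hs, hβtilde (i+1), hβtilde i, hαtilde (i+1), hαtilde i, hβhat, hαhat]
  field_simp
  ring
end

section
/- Let T > 0, a ∈ ℝ, ρ ∈ ℝ, ρ_β > 0, ρ_α > 0, and β, α ∈ ℝ be unknown constants. Suppose s(i+1) = ρ·s(i) + T·(β̃(i)·a + α̃(i))·x(i) with β̃(i) = β − β̂(i), α̃(i) = α − α̂(i), and the estimates are updated by β̂(i+1) = β̂(i) + T·s(i)·a·x(i)/ρ_β and α̂(i+1) = α̂(i) + T·s(i)·x(i)/ρ_α. Define the Lyapunov function V(i) = (1/2)·s(i)² + (1/2)·ρ_β·β̃(i)² + (1/2)·ρ_α·α̃(i)². Then the exact Lyapunov difference satisfies V(i+1) − V(i) = −(1 − ρ)·s(i)² + (1/2)·(s(i+1) − s(i))² + (1/2)·ρ_β·(β̃(i+1) − β̃(i))² + (1/2)·ρ_α·(α̃(i+1) − α̃(i))². -/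
/-- Under the scalar adaptive DSMC dynamics and adaptation laws,
the Lyapunov function `V(i) = ½s(i)² + ½ρ_β·β̃(i)² + ½ρ_α·α̃(i)²` has the
exact difference
`V(i+1) − V(i) = −(1 − ρ)·s(i)² + ½Δs(i)² + ½ρ_β·Δβ̃(i)² + ½ρ_α·Δα̃(i)²`. -/
theorem scalar_adaptive_dsmc_lyapunov_difference
    (T : ℝ) (hT : 0 < T) (a ρ : ℝ)
    (ρβ ρα : ℝ) (hρβ : 0 < ρβ) (hρα : 0 < ρα)
    (β α : ℝ)
    (s x βhat αhat βtilde αtilde V : ℕ → ℝ)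
    (hβtilde : ∀ i, βtilde i = β - βhat i)
    (hαtilde : ∀ i, αtilde i = α - αhat i)
    (hs : ∀ i, s (i + 1) = ρ * s i + T * (βtilde i * a + αtilde i) * x i)
    (hβhat : ∀ i, βhat (i + 1) = βhat i + T * s i * a * x i / ρβ)
    (hαhat : ∀ i, αhat (i + 1) = αhat i + T * s i * x i / ρα)
    (hV : ∀ i, V i = (1 / 2) * (s i) ^ 2 + (1 / 2) * ρβ * (βtilde i) ^ 2
      + (1 / 2) * ρα * (αtilde i) ^ 2) :
    ∀ i, V (i + 1) - V i
      = -(1 - ρ) * (s i) ^ 2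
        + (1 / 2) * (s (i + 1) - s i) ^ 2
        + (1 / 2) * ρβ * (βtilde (i + 1) - βtilde i) ^ 2
        + (1 / 2) * ρα * (αtilde (i + 1) - αtilde i) ^ 2 := by
  intro i
  have hβ := hρβ.ne'
  have hα := hρα.ne'
  rw [hV, hV, hβtilde (i+1), hαtilde (i+1), hβhat, hαhat, hs, hβtilde i, hαtilde i]
  field_simp
  ring
end

section
/- Fix p ∈ {1, …, r}, T > 0, ρ_p ∈ ℝ, nominal parameters a_{p1}, …, a_{pr} ∈ ℝ, unknown constants β_{p1}, …, β_{pr}, α_{p1}, …, α_{pr} ∈ ℝ, and positive adaptation gains ρ_{β_{pq}}, ρ_{α_{pq}} for q = 1, …, r. Suppose the p-th sliding surface satisfies s_p(i+1) = ρ_p·s_p(i) + T·Σ_{q=1}^{r} (β̃_{pq}(i)·a_{pq} + α̃_{pq}(i))·x_q(i), where β̃_{pq}(i) = β_{pq} − β̂_{pq}(i) and α̃_{pq}(i) = α_{pq} − α̂_{pq}(i), and the estimates are updated by β̂_{pq}(i+1) = β̂_{pq}(i) + T·s_p(i)·a_{pq}·x_q(i)/ρ_{β_{pq}} and α̂_{pq}(i+1)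 = α̂_{pq}(i) + T·s_p(i)·x_q(i)/ρ_{α_{pq}}. Then for every i: s_p(i)·(s_p(i+1) − s_p(i)) + Σ_{q=1}^{r} [ρ_{β_{pq}}·β̃_{pq}(i)·(β̃_{pq}(i+1) − β̃_{pq}(i)) + ρ_{α_{pq}}·α̃_{pq}(i)·(α̃_{pq}(i+1) − α̃_{pq}(i))] = −(1 − ρ_p)·s_p(i)². -/
open Finset in
/-- For the `p`-th sliding surface of an `r`-th order uncertain
linear system, `s_p(i+1) = ρ_p·s_p(i) + T·Σ_q (β̃_pq(i)·a_pq + α̃_pq(i))·x_q(i)`,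
with adaptation laws `β̂_pq(i+1) = β̂_pq(i) + T·s_p(i)·a_pq·x_q(i)/ρ_{β_pq}` and
`α̂_pq(i+1) = α̂_pq(i) + T·s_p(i)·x_q(i)/ρ_{α_pq}`, the exact identity
`s_p(i)·Δs_p(i) + Σ_q [ρ_{β_pq}·β̃_pq(i)·Δβ̃_pq(i) + ρ_{α_pq}·α̃_pq(i)·Δα̃_pq(i)]
  = −(1 − ρ_p)·s_p(i)²` holds for every `i`. -/
theorem adaptive_dsmc_componentwise_lyapunov_identity
    {r : ℕ} (T : ℝ) (hT : 0 < T)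
    (ρp : ℝ) (a : Fin r → ℝ)
    (β α : Fin r → ℝ)
    (ρβ ρα : Fin r → ℝ) (hρβ : ∀ q, 0 < ρβ q) (hρα : ∀ q, 0 < ρα q)
    (sp : ℕ → ℝ) (x : Fin r → ℕ → ℝ)
    (βhat αhat βtilde αtilde : Fin r → ℕ → ℝ)
    (hβtilde : ∀ q i, βtilde q i = β q - βhat q i)
    (hαtilde : ∀ q i, αtilde q i = α q - αhat q i)
    (hs : ∀ i, sp (i + 1) = ρp * sp i
      + T * ∑ q, (βtilde q i * a q + αtilde q i) * x q i)
    (hβhat : ∀ q i, βhat q (i + 1) = βhat q i + T * sp i * a q * x q i / ρβ q)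
    (hαhat : ∀ q i, αhat q (i + 1) = αhat q i + T * sp i * x q i / ρα q) :
    ∀ i, sp i * (sp (i + 1) - sp i)
        + ∑ q, (ρβ q * βtilde q i * (βtilde q (i + 1) - βtilde q i)
          + ρα q * αtilde q i * (αtilde q (i + 1) - αtilde q i))
      = -(1 - ρp) * (sp i) ^ 2 := by
  intro i
  have key : ∀ q : Fin r,
      ρβ q * βtilde q i * (βtilde q (i + 1) - βtilde q i)
        + ρα q * αtilde q i * (αtilde q (i + 1) - αtilde q i)
      = -(T * sp i * ((βtilde q i * a q + αtilde q i) * x q i)) := by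
    intro q
    have hb := (hρβ q).ne'
    have ha := (hρα q).ne'
    rw [hβtilde q (i+1), hβtilde q i, hαtilde q (i+1), hαtilde q i,
      hβhat q i, hαhat q i]
    field_simp
    ring
  rw [Finset.sum_congr rfl (fun q _ => key q), hs i, Finset.sum_neg_distrib,
    ← Finset.mul_sum]
  ring
end

section
/- Let ρ ∈ (0,1), ρ_β > 0, ρ_α > 0, and let s, β̃, α̃ : ℕ → ℝ. Define V(i) = (1/2)·s(i)² + (1/2)·ρ_β·β̃(i)² + (1/2)·ρ_α·α̃(i)², and suppose V(i+1) − V(i) = −(1 − ρ)·s(i)² for all i. Then V is nonincreasing and the sliding surface and parameter estimation errors remain uniformly bounded for all i: s(i)² ≤ 2·V(0), β̃(i)² ≤ 2·V(0)/ρ_β, and α̃(i)² ≤ 2·V(0)/ρ_α; moreover s(i) → 0 as i → ∞. -/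
/-- If `V(i) = ½s(i)² + ½ρ_β·β̃(i)² + ½ρ_α·α̃(i)²` satisfies
`V(i+1) − V(i) = −(1 − ρ)·s(i)²` with `ρ ∈ (0,1)` and `ρ_β, ρ_α > 0`, then `V`
is nonincreasing, the signals remain uniformly bounded
(`s(i)² ≤ 2V(0)`, `β̃(i)² ≤ 2V(0)/ρ_β`, `α̃(i)² ≤ 2V(0)/ρ_α`),
and `s(i) → 0` as `i → ∞`. -/
theorem adaptive_dsmc_boundedness_and_convergence
    (ρ : ℝ) (hρ : 0 < ρ ∧ ρ < 1)
    (ρβ ρα : ℝ) (hρβ : 0 < ρβ) (hρα : 0 < ρα)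
    (s βtilde αtilde V : ℕ → ℝ)
    (hV : ∀ i, V i = (1 / 2) * (s i) ^ 2 + (1 / 2) * ρβ * (βtilde i) ^ 2
      + (1 / 2) * ρα * (αtilde i) ^ 2)
    (hΔV : ∀ i, V (i + 1) - V i = -(1 - ρ) * (s i) ^ 2) :
    (∀ i, V (i + 1) ≤ V i) ∧
    (∀ i, (s i) ^ 2 ≤ 2 * V 0) ∧
    (∀ i, (βtilde i) ^ 2 ≤ 2 * V 0 / ρβ) ∧
    (∀ i, (αtilde i) ^ 2 ≤ 2 * V 0 / ρα) ∧
    Filter.Tendsto s Filter.atTop (nhds 0) := by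
  obtain ⟨hρ0, hρ1⟩ := hρ
  have hmono : ∀ i, V (i + 1) ≤ V i := by
    intro i
    nlinarith [hΔV i, sq_nonneg (s i)]
  have hanti : Antitone V := antitone_nat_of_succ_le hmono
  have hVle : ∀ i, V i ≤ V 0 := fun i => hanti (Nat.zero_le i)
  have hVge : ∀ i, (1 / 2) * (s i) ^ 2 ≤ V i := by
    intro i
    nlinarith [hV i, sq_nonneg (βtilde i), sq_nonneg (αtilde i)]
  have hVnonneg : ∀ i, 0 ≤ V i := by
    intro i
    nlinarith [hV i, sq_nonneg (s i), sq_nonneg (βtilde i), sq_nonneg (αtilde i)]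
  refine ⟨hmono, fun i => by nlinarith [hVge i, hVle i], ?_, ?_, ?_⟩
  · intro i
    rw [le_div_iff₀ hρβ]
    nlinarith [hV i, hVle i, sq_nonneg (s i), sq_nonneg (αtilde i)]
  · intro i
    rw [le_div_iff₀ hρα]
    nlinarith [hV i, hVle i, sq_nonneg (s i), sq_nonneg (βtilde i)]
  · -- V converges, so V(i+1)-V(i) → 0, so s² → 0, so s → 0
    have hbdd : BddBelow (Set.range V) := ⟨0, fun x ⟨i, hi⟩ => hi ▸ hVnonneg i⟩
    have hVconv := tendsto_atTop_ciInf hanti hbdd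
    have hdiff : Filter.Tendsto (fun i => V (i + 1) - V i) Filter.atTop (nhds 0) := by
      have := (hVconv.comp (Filter.tendsto_add_atTop_nat 1)).sub hVconv
      simpa using this
    have hs2 : Filter.Tendsto (fun i => (s i) ^ 2) Filter.atTop (nhds 0) := by
      have h1 : Filter.Tendsto (fun i => -(1 / (1 - ρ)) * (V (i + 1) - V i))
          Filter.atTop (nhds 0) := by
        simpa using hdiff.const_mul (-(1 / (1 - ρ)))
      have heq : (fun i => -(1 / (1 - ρ)) * (V (i + 1) - V i)) = fun i => (s i) ^ 2 := by
        funext i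
        rw [hΔV i]
        have h : (1:ℝ) - ρ ≠ 0 := by linarith
        field_simp
      rwa [heq] at h1
    have habs : Filter.Tendsto (fun i => |s i|) Filter.atTop (nhds 0) := by
      have := hs2.sqrt
      simp only [Real.sqrt_zero] at this
      convert this using 2 with i
      rw [Real.sqrt_sq_eq_abs]
    exact tendsto_zero_iff_abs_tendsto_zero s |>.mpr habs
end

section
/- Let T > 0, a ∈ ℝ, ρ ∈ (0,1), ρ_β > 0, ρ_α > 0, and β, α ∈ ℝ unknown constants. Suppose s(i+1) = ρ·s(i) + T·(β̃(i)·a + α̃(i))·x(i) with β̃(i) = β − β̂(i), α̃(i) = α − α̂(i), the estimates updated by β̂(i+1) = β̂(i) + T·s(i)·a·x(i)/ρ_β and α̂(i+1) = α̂(i) + T·s(i)·x(i)/ρ_α, and additionally assume the quadratic increment terms vanish, i.e., (s(i+1) − s(i))² + ρ_β·(β̃(i+1) − β̃(i))² + ρ_α·(α̃(i+1) − α̃(i))² ≤ ε(i) with Σ_{i=0}^{∞} ε(i) < ∞. Then the Lyapunov function V(i) = (1/2)·s(i)² + (1/2)·ρ_β·β̃(i)² + (1/2)·ρ_α·α̃(i)²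 satisfies V(i+1) − V(i) ≤ −(1 − ρ)·s(i)² + (1/2)·ε(i), the sequence V(i) is bounded, Σ s(i)² < ∞, and s(i) → 0 as i → ∞. -/
/-- Under the scalar adaptive DSMC dynamics and adaptation laws
with `ρ ∈ (0,1)`, if the weighted squared increments are dominated by a
summable sequence `ε`, then the Lyapunov function
`V(i) = ½s(i)² + ½ρ_β·β̃(i)² + ½ρ_α·α̃(i)²` satisfies
`V(i+1) − V(i) ≤ −(1 − ρ)·s(i)² + ½ε(i)`, `V` is bounded, `Σ s(i)² < ∞`, and
`s(i) → 0`. -/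
theorem scalar_adaptive_dsmc_convergence_summable_increments
    (T : ℝ) (hT : 0 < T) (a : ℝ) (ρ : ℝ) (hρ : 0 < ρ ∧ ρ < 1)
    (ρβ ρα : ℝ) (hρβ : 0 < ρβ) (hρα : 0 < ρα)
    (β α : ℝ)
    (s x βhat αhat βtilde αtilde V ε : ℕ → ℝ)
    (hβtilde : ∀ i, βtilde i = β - βhat i)
    (hαtilde : ∀ i, αtilde i = α - αhat i)
    (hs : ∀ i, s (i + 1) = ρ * s i + T * (βtilde i * a + αtilde i) * x i)
    (hβhat : ∀ i, βhat (i + 1) = βhat i + T * s i * a * x i / ρβ)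
    (hαhat : ∀ i, αhat (i + 1) = αhat i + T * s i * x i / ρα)
    (hε : ∀ i, (s (i + 1) - s i) ^ 2 + ρβ * (βtilde (i + 1) - βtilde i) ^ 2
      + ρα * (αtilde (i + 1) - αtilde i) ^ 2 ≤ ε i)
    (hεsum : Summable ε)
    (hV : ∀ i, V i = (1 / 2) * (s i) ^ 2 + (1 / 2) * ρβ * (βtilde i) ^ 2
      + (1 / 2) * ρα * (αtilde i) ^ 2) :
    (∀ i, V (i + 1) - V i ≤ -(1 - ρ) * (s i) ^ 2 + (1 / 2) * ε i) ∧
    (∃ M, ∀ i, V i ≤ M) ∧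
    Summable (fun i => (s i) ^ 2) ∧
    Filter.Tendsto s Filter.atTop (nhds 0) := by

  obtain ⟨hρ0, hρ1⟩ := hρ
  have hε0 : ∀ i, 0 ≤ ε i := fun i => le_trans (by positivity) (hε i)
  have key : ∀ i, V (i + 1) - V i ≤ -(1 - ρ) * (s i) ^ 2 + (1 / 2) * ε i := by
    intro i
    have e1 : βtilde (i+1) = βtilde i - T * s i * a * x i / ρβ := by
      rw [hβtilde, hβtilde, hβhat]; ring
    have e2 : αtilde (i+1) = αtilde i - T * s i * x i / ρα := by
      rw [hαtilde, hαtilde, hαhat]; ring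
    have hid : V (i+1) - V i = -(1-ρ) * (s i)^2 + (1/2) *
        ((s (i + 1) - s i) ^ 2 + ρβ * (βtilde (i + 1) - βtilde i) ^ 2
          + ρα * (αtilde (i + 1) - αtilde i) ^ 2) := by
      rw [hV (i+1), hV i, hs i, e1, e2]
      field_simp
      ring
    rw [hid]
    nlinarith [hε i]
  have hVstep : ∀ i, V (i+1) ≤ V i + (1/2) * ε i := by
    intro i
    have := key i
    nlinarith [sq_nonneg (s i)]
  have hVnonneg : ∀ i, 0 ≤ V i := by
    intro i; rw [hV i]; positivity
  have hpart : ∀ n, (∑ i ∈ Finset.range n, ε i) ≤ ∑' i, ε i :=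
    fun n => Summable.sum_le_tsum _ (fun i _ => hε0 i) hεsum
  have hVbound : ∀ n, V n ≤ V 0 + (1/2) * ∑ i ∈ Finset.range n, ε i := by
    intro n
    induction n with
    | zero => simp
    | succ n ih =>
      have := hVstep n
      rw [Finset.sum_range_succ]
      linarith
  have hM : ∀ i, V i ≤ V 0 + (1/2) * ∑' i, ε i := by
    intro i
    have := hVbound i
    have := hpart i
    linarith
  have hsum : Summable (fun i => (s i) ^ 2) := by
    apply summable_of_sum_range_le (c := (V 0 + (1/2) * ∑' i, ε i) / (1 - ρ))
      (fun i => sq_nonneg (s i))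
    intro n
    have htel : ∀ n, (1 - ρ) * ∑ i ∈ Finset.range n, (s i)^2 ≤
        V 0 - V n + (1/2) * ∑ i ∈ Finset.range n, ε i := by
      intro n
      induction n with
      | zero => simp
      | succ n ih =>
        have := key n
        rw [Finset.sum_range_succ, Finset.sum_range_succ]
        nlinarith
    have h1 := htel n
    have h2 := hpart n
    have h3 := hVnonneg n
    rw [le_div_iff₀ (by linarith : (0:ℝ) < 1 - ρ)]
    nlinarith
  refine ⟨key, ⟨_, hM⟩, hsum, ?_⟩
  have h2 : Filter.Tendsto (fun i => (s i)^2) Filter.atTop (nhds 0) :=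
    hsum.tendsto_atTop_zero
  have habs : Filter.Tendsto (fun i => |s i|) Filter.atTop (nhds 0) := by
    have : Filter.Tendsto (fun i => Real.sqrt ((s i)^2)) Filter.atTop (nhds (Real.sqrt 0)) :=
      (Real.continuous_sqrt.tendsto 0).comp h2
    simpa [Real.sqrt_sq_eq_abs] using this
  exact tendsto_zero_iff_abs_tendsto_zero s |>.mpr habs
end
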